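/- Let L be an n-dimensional completely irrational subspace of R^d and let (z_ν) be a sequence of nonzero integer vectors with |z_ν| → ∞ and dist(z_ν, L) → 0 (a sequence of best approximations to L). Then the z_ν cannot all eventually lie in a single linear subspace B of dimension d − n; in particular R(L) ≥ d − n + 1, where R(L) is the minimal dimension of a subspace containing all but finitely many z_ν. -/

import Mathlib

open Filter

/-- A vector in Euclidean `ℝ^d` has integer coordinates. -/
def IsIntegerVecE {d : ℕ} (v : EuclideanSpace ℝ (Fin d)) : Prop := ∀ i, ∃ k : ℤ, v i = (k : ℝ)

/-- A subspace of `ℝ^d` is rational if it has a basis consisting of integer vectors. -/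
def IsRationalSubspaceE {d : ℕ} (M : Submodule ℝ (EuclideanSpace ℝ (Fin d))) : Prop :=
  ∃ s : Set (EuclideanSpace ℝ (Fin d)), s.Finite ∧ (∀ v ∈ s, IsIntegerVecE v) ∧
    LinearIndependent ℝ ((↑) : s → EuclideanSpace ℝ (Fin d)) ∧ Submodule.span ℝ s = M

lemma span_int_rational {d : ℕ} (s : Set (EuclideanSpace ℝ (Fin d)))
    (hs : ∀ v ∈ s, IsIntegerVecE v) : IsRationalSubspaceE (Submodule.span ℝ s) := by
  obtain ⟨t, hts, hspan, hli⟩ := exists_linearIndependent ℝ s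
  exact ⟨t, hli.setFinite, fun v hv => hs v (hts hv), hli, hspan⟩

lemma single_int {d : ℕ} (i : Fin d) : IsIntegerVecE (EuclideanSpace.single i (1:ℝ)) := by
  intro j
  refine ⟨if j = i then 1 else 0, ?_⟩
  rw [EuclideanSpace.single_apply]
  split <;> simp

lemma extend_int_span {d r : ℕ} (hr : r ≤ d) :
    ∀ (j : ℕ) (s : Set (EuclideanSpace ℝ (Fin d))), (∀ v ∈ s, IsIntegerVecE v) →
      Module.finrank ℝ (Submodule.span ℝ s) + j = r →
      ∃ t, s ⊆ t ∧ (∀ v ∈ t, IsIntegerVecE v) ∧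
        Module.finrank ℝ (Submodule.span ℝ t) = r := by
  intro j
  induction j with
  | zero => intro s hs h; exact ⟨s, subset_rfl, hs, by simpa using h⟩
  | succ k ih =>
    intro s hs h
    have hlt : Module.finrank ℝ (Submodule.span ℝ s) < d := by omega
    have hne : ∃ i : Fin d, (EuclideanSpace.single i (1:ℝ)) ∉ Submodule.span ℝ s := by
      by_contra hc
      push_neg at hc
      have htop : Submodule.span ℝ s = ⊤ := by
        rw [eq_top_iff, ← (EuclideanSpace.basisFun (Fin d) ℝ).toBasis.span_eq,
          Submodule.span_le]
        rintro x ⟨i, rfl⟩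
        simpa using hc i
      rw [htop, finrank_top, finrank_euclideanSpace_fin] at hlt
      omega
    obtain ⟨i, hi⟩ := hne
    set x := EuclideanSpace.single i (1:ℝ)
    have hx0 : x ≠ 0 := by
      intro h
      have h1 : x i = 0 := by rw [h]; rfl
      simp [x, EuclideanSpace.single_apply] at h1
    have hstep : Module.finrank ℝ (Submodule.span ℝ (insert x s))
        = Module.finrank ℝ (Submodule.span ℝ s) + 1 := by
      have hle : Module.finrank ℝ (Submodule.span ℝ (insert x s))
          ≤ Module.finrank ℝ (Submodule.span ℝ s) + 1 := by
        rw [Submodule.span_insert]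
        have hsum := Submodule.finrank_sup_add_finrank_inf_eq
          (Submodule.span ℝ ({x} : Set (EuclideanSpace ℝ (Fin d)))) (Submodule.span ℝ s)
        have h1 : Module.finrank ℝ
            (Submodule.span ℝ ({x} : Set (EuclideanSpace ℝ (Fin d)))) = 1 :=
          finrank_span_singleton hx0
        omega
      have hgt : Module.finrank ℝ (Submodule.span ℝ s)
          < Module.finrank ℝ (Submodule.span ℝ (insert x s)) := by
        apply Submodule.finrank_lt_finrank_of_lt
        refine lt_of_le_of_ne (Submodule.span_mono (Set.subset_insert x s)) ?_
        intro heq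
        exact hi (heq ▸ Submodule.subset_span (Set.mem_insert x s))
      omega
    obtain ⟨t, hst, hti, htr⟩ := ih (insert x s)
      (by rintro v hv; rcases hv with rfl | hv; exacts [single_int i, hs v hv])
      (by omega)
    exact ⟨t, (Set.subset_insert x s).trans hst, hti, htr⟩

theorem stmt15 (d n : ℕ) (hn : 0 < n) (hnd : n < d)
    (L : Submodule ℝ (EuclideanSpace ℝ (Fin d))) (hLdim : Module.finrank ℝ L = n)
    (hCI : ∀ M : Submodule ℝ (EuclideanSpace ℝ (Fin d)),
      IsRationalSubspaceE M → Module.finrank ℝ M = d - n → L ⊓ M = ⊥)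
    (z : ℕ → EuclideanSpace ℝ (Fin d))
    (hint : ∀ ν, IsIntegerVecE (z ν)) (hnz : ∀ ν, z ν ≠ 0)
    (hgrow : Tendsto (fun ν => ‖z ν‖) atTop atTop)
    (happrox : Tendsto (fun ν => Metric.infDist (z ν) (L : Set (EuclideanSpace ℝ (Fin d))))
      atTop (nhds 0)) :
    ∀ B : Submodule ℝ (EuclideanSpace ℝ (Fin d)),
      (∃ ν₀, ∀ ν ≥ ν₀, z ν ∈ B) → d - n + 1 ≤ Module.finrank ℝ B := by
  rintro B ⟨ν₀, hB⟩
  by_contra hcon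
  push_neg at hcon
  have hBr : Module.finrank ℝ B ≤ d - n := by omega
  set s : Set (EuclideanSpace ℝ (Fin d)) := z '' {ν | ν₀ ≤ ν} with hs_def
  have hs_int : ∀ v ∈ s, IsIntegerVecE v := by
    rintro v ⟨ν, _, rfl⟩; exact hint ν
  have hWB : Submodule.span ℝ s ≤ B :=
    Submodule.span_le.mpr (by rintro _ ⟨ν, hν, rfl⟩; exact hB ν hν)
  have hWr : Module.finrank ℝ (Submodule.span ℝ s) ≤ d - n :=
    le_trans (Submodule.finrank_mono hWB) hBr
  obtain ⟨t, hst, ht_int, ht_rank⟩ := extend_int_span (show d - n ≤ d by omega)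
    (d - n - Module.finrank ℝ (Submodule.span ℝ s)) s hs_int (by omega)
  set M := Submodule.span ℝ t with hM_def
  have hMrat : IsRationalSubspaceE M := span_int_rational t ht_int
  have hbot : L ⊓ M = ⊥ := hCI M hMrat ht_rank
  have hzM : ∀ ν ≥ ν₀, z ν ∈ M := fun ν hν =>
    Submodule.span_mono hst (Submodule.subset_span ⟨ν, hν, rfl⟩)
  -- analytic part
  set P : EuclideanSpace ℝ (Fin d) →L[ℝ] Lᗮ := Submodule.orthogonalProjectionOnto Lᗮ with hP_def
  have hPzero : ∀ y ∈ L, P y = 0 := fun y hy =>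
    Submodule.orthogonalProjectionOnto_eq_zero_iff.mpr (L.le_orthogonal_orthogonal hy)
  have hPle : ∀ x : EuclideanSpace ℝ (Fin d), (‖P x‖ : ℝ) ≤
      Metric.infDist x (L : Set (EuclideanSpace ℝ (Fin d))) := by
    intro x
    by_contra hc
    push_neg at hc
    obtain ⟨y, hy, hlt⟩ := (Metric.infDist_lt_iff ⟨0, L.zero_mem⟩).mp hc
    have heq : P x = P (x - y) := by rw [map_sub, hPzero y hy, sub_zero]
    have : ‖P x‖ ≤ ‖x - y‖ := by
      rw [heq]
      calc ‖P (x - y)‖ ≤ ‖P‖ * ‖x - y‖ := P.le_opNorm _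
        _ ≤ 1 * ‖x - y‖ :=
            mul_le_mul_of_nonneg_right (Submodule.orthogonalProjectionOnto_norm_le _) (norm_nonneg _)
        _ = ‖x - y‖ := one_mul _
    rw [dist_eq_norm] at hlt
    linarith
  set f : M →ₗ[ℝ] Lᗮ := (P : EuclideanSpace ℝ (Fin d) →ₗ[ℝ] Lᗮ).comp M.subtype with hf_def
  have hker : LinearMap.ker f = ⊥ := by
    rw [LinearMap.ker_eq_bot']
    rintro ⟨x, hx⟩ hfx
    have hP0 : Submodule.orthogonalProjectionOnto Lᗮ x = 0 := hfx
    have hxL : x ∈ L := by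
      have : x ∈ Lᗮᗮ := Submodule.orthogonalProjectionOnto_eq_zero_iff.mp hP0
      rwa [Submodule.orthogonal_orthogonal] at this
    have : x ∈ L ⊓ M := ⟨hxL, hx⟩
    rw [hbot] at this
    exact Subtype.ext (by simpa using this)
  obtain ⟨K, hK0, hKa⟩ := f.exists_antilipschitzWith hker
  have hbound : ∀ ν ≥ ν₀, ‖z ν‖ ≤ (K : ℝ) *
      Metric.infDist (z ν) (L : Set (EuclideanSpace ℝ (Fin d))) := by
    intro ν hν
    have h1 : ‖(⟨z ν, hzM ν hν⟩ : M)‖ ≤ (K : ℝ) * ‖f ⟨z ν, hzM ν hν⟩‖ := by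
      have := hKa.le_mul_dist (⟨z ν, hzM ν hν⟩ : M) 0
      simpa [dist_eq_norm] using this
    have h2 : ‖f (⟨z ν, hzM ν hν⟩ : M)‖ ≤
        Metric.infDist (z ν) (L : Set (EuclideanSpace ℝ (Fin d))) := hPle (z ν)
    calc ‖z ν‖ = ‖(⟨z ν, hzM ν hν⟩ : M)‖ := rfl
      _ ≤ (K : ℝ) * ‖f ⟨z ν, hzM ν hν⟩‖ := h1
      _ ≤ (K : ℝ) * Metric.infDist (z ν) (L : Set (EuclideanSpace ℝ (Fin d))) :=
          mul_le_mul_of_nonneg_left h2 (by positivity)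
  have hsmall : Tendsto (fun ν => (K : ℝ) *
      Metric.infDist (z ν) (L : Set (EuclideanSpace ℝ (Fin d)))) atTop (nhds 0) := by
    simpa using happrox.const_mul (K : ℝ)
  have hev : ∀ᶠ ν in atTop, (K : ℝ) *
      Metric.infDist (z ν) (L : Set (EuclideanSpace ℝ (Fin d))) < 1 :=
    hsmall.eventually_lt_const one_pos
  have hbig : ∀ᶠ ν in atTop, (1 : ℝ) ≤ ‖z ν‖ := hgrow.eventually_ge_atTop 1
  obtain ⟨ν, ⟨h1, h2⟩, h3⟩ := ((hev.and hbig).and (eventually_ge_atTop ν₀)).exists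
  exact absurd (le_trans h2 (hbound ν h3)) (not_le.mpr h1)
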